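/- Let H be a real Hilbert space, a(·,·) a symmetric bilinear form with c_1‖v‖ ≤ ‖v‖_E ≤ c_2‖v‖ where ‖v‖_E = √a(v,v), b a continuous linear functional, Ψ(u) = ½a(u,u) − b(u), and û = argmin_H Ψ. Let F(u;α) = F(u;0) + F(0;α) be affine-parameterized maps with ‖F(u;0) − F(v;0)‖ ≤ c‖u−v‖ where c c_2/c_1 < 1, let W = {F(0;α) | α ∈ ℝ^M} (a linear subspace), W(u) = F(u;0) + W, and G(u) = argmin_{w∈W(u)} Ψ(w). Then G is a contraction: ‖G(u) − G(v)‖ ≤ (c c_2/c_1)‖u−v‖. -/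

import Mathlib

/-- In the collage-fitting setting, the operator `G(u) = argmin_{w ∈ F(u;0)+W} Ψ(w)` is a
contraction with factor `γ = c·c₂/c₁`: `‖G(u) − G(v)‖ ≤ γ‖u − v‖`. -/
theorem collage_operator_contraction {H : Type*} [NormedAddCommGroup H]
    [InnerProductSpace ℝ H] [CompleteSpace H]
    (a : H → H → ℝ)
    (haddl : ∀ u v w, a (u + v) w = a u w + a v w)
    (hsmull : ∀ (r : ℝ) u v, a (r • u) v = r * a u v)
    (hsymm : ∀ u v, a u v = a v u)
    (b : H →L[ℝ] ℝ)
    (Ψ : H → ℝ) (hΨ : ∀ u, Ψ u = a u u / 2 - b u)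
    (E : H → ℝ) (hE : ∀ v, E v = Real.sqrt (a v v))
    (c₁ c₂ : ℝ) (hc₁ : 0 < c₁)
    (hlow : ∀ v, c₁ * ‖v‖ ≤ E v) (hupp : ∀ v, E v ≤ c₂ * ‖v‖)
    (uhat : H) (huhat : ∀ v, Ψ uhat ≤ Ψ v)
    (F₀ : H → H) (c : ℝ) (hc0 : 0 ≤ c)
    (hF₀ : ∀ u v, ‖F₀ u - F₀ v‖ ≤ c * ‖u - v‖)
    (hγ : c * c₂ / c₁ < 1)
    (W : Submodule ℝ H)
    (G : H → H)
    (hGmem : ∀ u, ∃ w ∈ W, G u = F₀ u + w)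
    (hGmin : ∀ u, ∀ w ∈ W, Ψ (G u) ≤ Ψ (F₀ u + w)) :
    ∀ u v, ‖G u - G v‖ ≤ (c * c₂ / c₁) * ‖u - v‖ := by
  -- basic bilinearity facts
  have hzerol : ∀ v, a 0 v = 0 := by
    intro v
    have := haddl 0 0 v
    simp at this
    linarith
  have hnegl : ∀ u v, a (-u) v = -a u v := by
    intro u v
    have := hsmull (-1) u v
    simpa using this
  have hsubl : ∀ u v w, a (u - v) w = a u w - a v w := by
    intro u v w
    rw [sub_eq_add_neg, haddl, hnegl]; ring
  have haddr : ∀ u v w, a u (v + w) = a u v + a u w := by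
    intro u v w; rw [hsymm, haddl, hsymm v u, hsymm w u]
  have hsubr : ∀ u v w, a u (v - w) = a u v - a u w := by
    intro u v w; rw [hsymm, hsubl, hsymm v u, hsymm w u]
  have hsmulr : ∀ (r : ℝ) u v, a u (r • v) = r * a u v := by
    intro r u v; rw [hsymm, hsmull, hsymm v u]
  -- positivity / coercivity
  have hpos : ∀ v, c₁ ^ 2 * ‖v‖ ^ 2 ≤ a v v := by
    intro v
    by_cases hv : a v v < 0
    · exfalso
      have h1 := hlow v
      rw [hE v, Real.sqrt_eq_zero_of_nonpos hv.le] at h1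
      have hv0 : v = 0 := by
        have : ‖v‖ ≤ 0 := by nlinarith [norm_nonneg v]
        simpa using le_antisymm this (norm_nonneg v)
      rw [hv0, hzerol] at hv; linarith
    · push_neg at hv
      have h1 := hlow v
      rw [hE v] at h1
      have h2 : (c₁ * ‖v‖) ^ 2 ≤ Real.sqrt (a v v) ^ 2 := by
        apply pow_le_pow_left₀ (by positivity) h1
      rw [Real.sq_sqrt hv] at h2
      nlinarith
  have hnn : ∀ v, 0 ≤ a v v := fun v => le_trans (by positivity) (hpos v)
  have hupp2 : ∀ v, a v v ≤ c₂ ^ 2 * ‖v‖ ^ 2 := by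
    intro v
    have h1 := hupp v
    rw [hE v] at h1
    have h2 : Real.sqrt (a v v) ^ 2 ≤ (c₂ * ‖v‖) ^ 2 := by
      apply pow_le_pow_left₀ (Real.sqrt_nonneg _) h1
    rw [Real.sq_sqrt (hnn v)] at h2
    nlinarith
  -- variational principle: if x minimizes along direction w then a x w = b w
  have hvar : ∀ x w : H, (∀ t : ℝ, Ψ x ≤ Ψ (x + t • w)) → a x w = b w := by
    intro x w hmin
    set L := a x w - b w with hL
    set Q := a w w with hQ
    have key : ∀ t : ℝ, 0 ≤ t * L + t ^ 2 / 2 * Q := by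
      intro t
      have h := hmin t
      rw [hΨ, hΨ] at h
      have hexp : a (x + t • w) (x + t • w)
          = a x x + 2 * t * a x w + t ^ 2 * a w w := by
        simp only [haddl, haddr, hsmull, hsmulr]
        rw [hsymm w x]; ring
      rw [hexp] at h
      simp only [map_add, map_smul, smul_eq_mul] at h
      simp only [hL, hQ]; linarith
    have hQnn : 0 ≤ Q := hnn w
    have hL0 : L = 0 := by
      by_cases hQ0 : Q = 0
      · have h1 := key 1
        have h2 := key (-1)
        rw [hQ0] at h1 h2; nlinarith
      · have hQpos : 0 < Q := lt_of_le_of_ne hQnn (Ne.symm hQ0)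
        have h := key (-L / Q)
        have h2 : (-L / Q * L + (-L / Q) ^ 2 / 2 * Q) * (2 * Q) = -L ^ 2 := by
          field_simp; ring
        have h3 : 0 ≤ -L ^ 2 := h2 ▸ mul_nonneg h (by linarith)
        have h4 : L ^ 2 = 0 := le_antisymm (by linarith) (sq_nonneg L)
        exact sq_eq_zero_iff.mp h4
    linarith [hL0]
  -- Euler-Lagrange for G u in directions from W
  have hGvar : ∀ u, ∀ w ∈ W, a (G u) w = b w := by
    intro u w hw
    obtain ⟨w₀, hw₀, hGu⟩ := hGmem u
    apply hvar
    intro t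
    have hmem : w₀ + t • w ∈ W := W.add_mem hw₀ (W.smul_mem t hw)
    have := hGmin u (w₀ + t • w) hmem
    calc Ψ (G u) ≤ Ψ (F₀ u + (w₀ + t • w)) := this
      _ = Ψ (G u + t • w) := by rw [hGu]; rw [add_assoc]
  intro u v
  set d := G u - G v with hd
  set p := F₀ u - F₀ v with hp
  clear_value d p
  -- d is a-orthogonal to W
  have horth : ∀ w ∈ W, a d w = 0 := by
    intro w hw
    rw [hd, hsubl, hGvar u w hw, hGvar v w hw, sub_self]
  -- d - p ∈ W
  obtain ⟨wu, hwu, hGu⟩ := hGmem u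
  obtain ⟨wv, hwv, hGv⟩ := hGmem v
  have hq : d - p ∈ W := by
    have : d - p = wu - wv := by rw [hd, hp, hGu, hGv]; abel
    rw [this]; exact W.sub_mem hwu hwv
  -- a d d = a d p
  have hddp : a d d = a d p := by
    have h1 : a d (d - p) = 0 := horth _ hq
    rw [hsubr] at h1; linarith
  -- Cauchy-Schwarz trick: a d d ≤ a p p
  have hdp : a d d ≤ a p p := by
    by_cases hdd : a d d = 0
    · rw [hdd]; exact hnn p
    · have hddpos : 0 < a d d := lt_of_le_of_ne (hnn d) (Ne.symm hdd)
      -- expand a (p - t d)(p - t d) ≥ 0 with t = a d p / a d d = 1 (since add = adp)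
      have hexp : 0 ≤ a (p - d) (p - d) := hnn _
      have : a (p - d) (p - d) = a p p - 2 * a d p + a d d := by
        rw [hsubl, hsubr, hsubr, hsymm p d]; ring
      rw [this, ← hddp] at hexp
      linarith
  -- combine norm bounds: c₁‖d‖ ≤ E d ≤ E p ≤ c₂‖p‖
  by_cases huv : u = v
  · subst huv
    simp [hd]
  · have hc₂ : 0 ≤ c₂ := by
      have h1 : (0:ℝ) ≤ E (u - v) := by rw [hE]; exact Real.sqrt_nonneg _
      have h2 := hupp (u - v)
      have h3 : 0 < ‖u - v‖ := by
        rw [norm_pos_iff, sub_ne_zero]; exact huv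
      nlinarith
    have hEd : c₁ * ‖d‖ ≤ c₂ * ‖p‖ := by
      have h1 := hlow d
      have h2 := hupp p
      have h3 : E d ≤ E p := by
        rw [hE, hE]
        exact Real.sqrt_le_sqrt hdp
      linarith
    have hpb : ‖p‖ ≤ c * ‖u - v‖ := hp ▸ hF₀ u v
    have : c₁ * ‖d‖ ≤ c₂ * (c * ‖u - v‖) := by nlinarith
    rw [div_mul_eq_mul_div, le_div_iff₀ hc₁]
    nlinarith
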